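/- Let Z and Y be compact metric spaces. Let g^n, g : Z×Y → ℝ be continuous with g^n → g uniformly, and let η^n ≥ 0 be reals with η^n → η ∈ [0,∞). Let σ^n, σ be Borel probability measures on Z with σ^n → σ weakly*, let ρ^n, ρ be Borel probability measures on Y with ρ^n → ρ weakly*, and let λ^n ∈ Π(σ^n, ρ^n) be Borel probability measures on Z×Y with λ^n → λ weakly*. Then λ ∈ Π(σ, ρ) and ∫_{Z×Y} g dλ + η·KL(λ | σ⊗ρ) ≤ liminf_{n→∞} [ ∫_{Z×Y} g^n dλ^n + η^n·KL(λ^n | σ^n⊗ρ^n) ], with the convention 0·(+∞) = 0. -/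

import Mathlib

open MeasureTheory Set Filter
open scoped ENNReal Classical

noncomputable section

/-- Kullback–Leibler divergence via `φ(s) = s log s − s + 1`. -/
def KLphi (s : ℝ) : ℝ := s * Real.log s - s + 1

noncomputable def KL {A : Type*} [MeasurableSpace A] (α β : Measure A) : ℝ≥0∞ :=
  if α ≪ β then ∫⁻ x, ENNReal.ofReal (KLphi ((α.rnDeriv β x).toReal)) ∂β else ⊤

/-- Product of two measures. -/
noncomputable def prodM {A B : Type*} [MeasurableSpace A] [MeasurableSpace B]
    (α : Measure A) (β : Measure B) : Measure (A × B) :=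
  α.bind fun a => β.map (Prod.mk a)

/-- Weak* convergence of measures: convergence of integrals of all continuous functions. -/
def WkTendsto {A : Type*} [MeasurableSpace A] [TopologicalSpace A]
    (μs : ℕ → Measure A) (μ : Measure A) : Prop :=
  ∀ g : A → ℝ, Continuous g →
    Tendsto (fun n => ∫ x, g x ∂μs n) atTop (nhds (∫ x, g x ∂μ))

lemma log_ge_one_sub_inv {x : ℝ} (hx : 0 < x) : 1 - x⁻¹ ≤ Real.log x := by
  have h := Real.log_le_sub_one_of_pos (inv_pos.mpr hx)
  rw [Real.log_inv] at h; linarith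

lemma KLphi_nonneg {s : ℝ} (hs : 0 ≤ s) : 0 ≤ KLphi s := by
  rcases eq_or_lt_of_le hs with h|h
  · simp [KLphi, ← h]
  · have h1 := log_ge_one_sub_inv h
    have h2 : s * (1 - s⁻¹) ≤ s * Real.log s := by
      exact mul_le_mul_of_nonneg_left h1 h.le
    have hs' : s * s⁻¹ = 1 := mul_inv_cancel₀ h.ne'
    unfold KLphi
    nlinarith

lemma young {s t : ℝ} (hs : 0 ≤ s) : s * t - Real.exp t + 1 ≤ KLphi s := by
  rcases eq_or_lt_of_le hs with h|h
  · have := Real.exp_pos t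
    simp only [KLphi, ← h]
    nlinarith
  · have h1 : Real.exp (t - Real.log s) ≥ 1 + (t - Real.log s) := by
      linarith [Real.add_one_le_exp (t - Real.log s)]
    have h2 : Real.exp t = s * Real.exp (t - Real.log s) := by
      nth_rewrite 1 [← Real.exp_log h]
      rw [← Real.exp_add]
      congr 1; ring
    have h3 : Real.exp t ≥ s * (1 + (t - Real.log s)) := by
      rw [h2]; exact mul_le_mul_of_nonneg_left h1 h.le
    unfold KLphi; nlinarith

lemma abs_exp_sub_exp_le {a c B : ℝ} (ha : |a| ≤ B) (hc : |c| ≤ B) :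
    |Real.exp a - Real.exp c| ≤ Real.exp B * |a - c| := by
  have key : ∀ u v : ℝ, v ≤ u → |u| ≤ B → Real.exp u - Real.exp v ≤ Real.exp B * (u - v) := by
    intro u v huv hu
    have h1 : 1 - (u - v) ≤ Real.exp (v - u) := by
      linarith [Real.add_one_le_exp (v - u)]
    have h2 : Real.exp v = Real.exp u * Real.exp (v - u) := by
      rw [← Real.exp_add]; ring_nf
    have h3 : Real.exp u ≤ Real.exp B := Real.exp_le_exp.2 (le_of_abs_le hu)
    have h4 : Real.exp u * (1 - (u - v)) ≤ Real.exp v := by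
      rw [h2]; exact mul_le_mul_of_nonneg_left h1 (Real.exp_pos u).le
    nlinarith [Real.exp_pos u]
  rcases le_total c a with h|h
  · rw [abs_of_nonneg (by linarith [Real.exp_le_exp.2 h] : (0:ℝ) ≤ Real.exp a - Real.exp c),
      abs_of_nonneg (by linarith : (0:ℝ) ≤ a - c)]
    exact key a c h ha
  · rw [abs_sub_comm, abs_sub_comm a c,
      abs_of_nonneg (by linarith [Real.exp_le_exp.2 h] : (0:ℝ) ≤ Real.exp c - Real.exp a),
      abs_of_nonneg (by linarith : (0:ℝ) ≤ c - a)]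
    exact key c a h hc

lemma clamp_abs_le {p gval b : ℝ} (hp : |p| ≤ b) :
    |max (-b) (min b gval) - p| ≤ |gval - p| := by
  have hb : 0 ≤ b := (abs_nonneg p).trans hp
  rw [abs_le] at hp
  rcases le_total gval (-b) with h|h
  · rw [min_eq_right (by linarith), max_eq_left h]
    rw [abs_of_nonpos (by linarith), abs_of_nonpos (by linarith)]; linarith
  · rcases le_total b gval with h2|h2
    · rw [min_eq_left h2, max_eq_right (by linarith)]
      rw [abs_of_nonneg (by linarith), abs_of_nonneg (by linarith)]; linarith
    · rw [min_eq_right h2, max_eq_right h]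

lemma integrable_of_bdd {X : Type*} [MeasurableSpace X] {μ : Measure X} [IsFiniteMeasure μ]
    {f : X → ℝ} (hm : AEStronglyMeasurable f μ) {C : ℝ} (hC : ∀ x, |f x| ≤ C) :
    Integrable f μ :=
  ⟨hm, HasFiniteIntegral.of_bounded (C := C)
    (Eventually.of_forall (fun x => by simpa [Real.norm_eq_abs] using hC x))⟩

lemma cont_integrable {X : Type*} [TopologicalSpace X] [CompactSpace X] [MeasurableSpace X]
    [OpensMeasurableSpace X] (μ : Measure X) [IsFiniteMeasure μ] {f : X → ℝ}
    (hf : Continuous f) : Integrable f μ := by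
  obtain ⟨C, hC⟩ := isCompact_univ.exists_bound_of_continuousOn hf.continuousOn
  exact integrable_of_bdd hf.measurable.aestronglyMeasurable
    (C := C) (fun x => by simpa [Real.norm_eq_abs] using hC x (mem_univ x))

def dualF {X : Type*} [MeasurableSpace X] (μ ν : Measure X) (f : X → ℝ) : ℝ :=
  (∫ x, f x ∂μ) - ∫ x, (Real.exp (f x) - 1) ∂ν

lemma dual_le_KL {X : Type*} [TopologicalSpace X] [CompactSpace X] [MeasurableSpace X]
    [OpensMeasurableSpace X] (μ ν : Measure X) [IsProbabilityMeasure μ] [IsProbabilityMeasure ν]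
    {f : X → ℝ} (hf : Continuous f) :
    (dualF μ ν f : EReal) ≤ ((KL μ ν : ℝ≥0∞) : EReal) := by
  by_cases hac : μ ≪ ν
  swap
  · simp [KL, hac]
  obtain ⟨B, hB⟩ := isCompact_univ.exists_bound_of_continuousOn hf.continuousOn
  have hBf : ∀ x, |f x| ≤ B := fun x => by simpa [Real.norm_eq_abs] using hB x (mem_univ x)
  set r : X → ℝ := fun x => (μ.rnDeriv ν x).toReal with hr
  have hrm : Measurable r := (Measure.measurable_rnDeriv μ ν).ennreal_toReal
  have hrnn : ∀ x, 0 ≤ r x := fun x => ENNReal.toReal_nonneg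
  have hri : Integrable r ν := Measure.integrable_toReal_rnDeriv
  -- integrability
  have hfint : Integrable f ν := integrable_of_bdd hf.measurable.aestronglyMeasurable hBf
  have hrf : Integrable (fun x => r x * f x) ν := by
    have := hri.bdd_mul hf.measurable.aestronglyMeasurable (Eventually.of_forall fun x => by
      simpa [Real.norm_eq_abs] using hBf x)
    simpa [mul_comm] using this
  have hexp : Integrable (fun x => Real.exp (f x) - 1) ν := by
    refine integrable_of_bdd ((Real.continuous_exp.comp hf).sub continuous_const
      |>.measurable.aestronglyMeasurable) (C := Real.exp B + 1) (fun x => ?_)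
    have h1 : Real.exp (f x) ≤ Real.exp B := Real.exp_le_exp.2 (le_of_abs_le (hBf x))
    have h2 := Real.exp_pos (f x)
    rw [abs_le]; constructor <;> nlinarith
  -- key : ∫ f dμ = ∫ r f dν
  have key : ∫ x, f x ∂μ = ∫ x, r x * f x ∂ν := by
    rw [← MeasureTheory.integral_rnDeriv_smul hac (f := f)]
    simp [hr, smul_eq_mul]
  set h : X → ℝ := fun x => r x * f x - (Real.exp (f x) - 1) with hh
  have hdual : dualF μ ν f = ∫ x, h x ∂ν := by
    rw [dualF, key, ← integral_sub hrf hexp]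
  have hint : Integrable h ν := hrf.sub hexp
  set hp : X → ℝ := fun x => max (h x) 0 with hhp
  have hple : ∀ x, hp x ≤ KLphi (r x) := by
    intro x
    refine max_le ?_ (KLphi_nonneg (hrnn x))
    have := young (t := f x) (hrnn x)
    simp only [hh]; linarith
  have h1 : ∫ x, h x ∂ν ≤ ∫ x, hp x ∂ν :=
    integral_mono hint hint.pos_part (fun x => le_max_left _ _)
  have h2 : ENNReal.ofReal (∫ x, hp x ∂ν) = ∫⁻ x, ENNReal.ofReal (hp x) ∂ν :=
    ofReal_integral_eq_lintegral_ofReal hint.pos_part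
      (Eventually.of_forall (fun x => le_max_right _ _))
  have h3 : (∫⁻ x, ENNReal.ofReal (hp x) ∂ν) ≤ ∫⁻ x, ENNReal.ofReal (KLphi (r x)) ∂ν :=
    lintegral_mono (fun x => ENNReal.ofReal_le_ofReal (hple x))
  have hKL : KL μ ν = ∫⁻ x, ENNReal.ofReal (KLphi (r x)) ∂ν := by simp [KL, hac, hr]
  calc (dualF μ ν f : EReal) ≤ ((∫ x, hp x ∂ν : ℝ) : EReal) := by
        exact_mod_cast hdual ▸ h1
    _ ≤ ((ENNReal.ofReal (∫ x, hp x ∂ν) : ℝ≥0∞) : EReal) := by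
        rw [EReal.coe_ennreal_ofReal]
        exact EReal.coe_le_coe_iff.2 (le_max_left _ _)
    _ ≤ ((KL μ ν : ℝ≥0∞) : EReal) := by
        rw [EReal.coe_ennreal_le_coe_ennreal_iff, h2, hKL]; exact h3

lemma dualF_zero {X : Type*} [MeasurableSpace X] (μ ν : Measure X) :
    dualF μ ν (fun _ => 0) = 0 := by
  simp [dualF]

/-- The non-absolutely-continuous case: the dual functional is unbounded. -/
lemma exists_dual_gt_of_not_ac {X : Type*} [MetricSpace X] [CompactSpace X] [MeasurableSpace X]
    [BorelSpace X] (μ ν : Measure X) [IsProbabilityMeasure μ] [IsProbabilityMeasure ν]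
    (hac : ¬ μ ≪ ν) (c : ℝ) (hc : 0 ≤ c) :
    ∃ f : X → ℝ, Continuous f ∧ c < dualF μ ν f := by
  have hsex : ∃ s : Set X, ν s = 0 ∧ μ s ≠ 0 := by
    by_contra hcon
    push_neg at hcon
    exact hac (fun s hs => hcon s hs)
  obtain ⟨s, hνs, hμs⟩ := hsex
  set t := toMeasurable ν s with ht
  have hνt : ν t = 0 := by rw [ht, measure_toMeasurable]; exact hνs
  have hμt : μ t ≠ 0 := fun h => hμs (le_antisymm (le_trans (measure_mono (subset_toMeasurable ν s)) h.le) (by simp))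
  -- closed F ⊆ t with positive μ measure
  have htm : MeasurableSet t := measurableSet_toMeasurable ν s
  have hhalf : μ t / 2 < μ t := ENNReal.half_lt_self hμt (measure_ne_top μ t)
  obtain ⟨F, hFt, hFcl, hFm⟩ := Measure.WeaklyRegular.innerRegular_measurable (μ := μ) ⟨htm, measure_ne_top μ t⟩ (μ t / 2) hhalf
  have hμF : μ F ≠ 0 := fun h => by simp [h] at hFm
  have hνF : ν F = 0 := le_antisymm (le_trans (measure_mono hFt) hνt.le) (by simp)
  set m : ℝ := (μ F).toReal with hm
  have hmpos : 0 < m := ENNReal.toReal_pos hμF (measure_ne_top μ F)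
  set T : ℝ := (c + 2) / m with hT
  have hTpos : 0 < T := div_pos (by linarith) hmpos
  -- open U ⊇ F with small ν measure
  have hεpos : (0:ℝ≥0∞) < ENNReal.ofReal (Real.exp T)⁻¹ := by
    rw [ENNReal.ofReal_pos]; positivity
  obtain ⟨U, hFU, hUo, hνU⟩ := Set.exists_isOpen_lt_of_lt F (ENNReal.ofReal (Real.exp T)⁻¹)
    (by rw [hνF]; exact hεpos)
  -- Urysohn
  obtain ⟨f, hf0, hf1, hf01⟩ := exists_continuous_zero_one_of_isClosed
    (isClosed_compl_iff.mpr hUo) hFcl (disjoint_compl_left_iff.mpr hFU)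
  refine ⟨fun x => T * f x, continuous_const.mul f.continuous, ?_⟩
  have hfnn : ∀ x, 0 ≤ f x := fun x => (hf01 x).1
  have hfle : ∀ x, f x ≤ 1 := fun x => (hf01 x).2
  have hTf : Integrable (fun x => T * f x) μ := by
    refine integrable_of_bdd (continuous_const.mul f.continuous).measurable.aestronglyMeasurable
      (C := T) (fun x => ?_)
    rw [abs_of_nonneg (mul_nonneg hTpos.le (hfnn x))]
    nlinarith [hfnn x, hfle x]
  -- lower bound for the μ-integral
  have hlow : T * m ≤ ∫ x, T * f x ∂μ := by
    have hind : ∫ x, F.indicator (fun _ => T) x ∂μ = T * m := by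
      rw [integral_indicator_const _ hFcl.measurableSet]; simp [hm, mul_comm, Measure.real]
    rw [← hind]
    refine integral_mono (integrable_const T |>.indicator hFcl.measurableSet) hTf (fun x => ?_)
    by_cases hx : x ∈ F
    · simp [indicator_of_mem hx, hf1 hx]
    · simp only [indicator_of_notMem hx]
      exact mul_nonneg hTpos.le (hfnn x)
  -- upper bound for the ν-integral
  have hup : ∫ x, (Real.exp (T * f x) - 1) ∂ν ≤ 1 := by
    have hintg : Integrable (fun x => Real.exp (T * f x) - 1) ν := by
      refine integrable_of_bdd ((Real.continuous_exp.comp (continuous_const.mul f.continuous)).sub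
        continuous_const).measurable.aestronglyMeasurable (C := Real.exp T + 1) (fun x => ?_)
      have h1 : Real.exp (T * f x) ≤ Real.exp T := Real.exp_le_exp.2 (by nlinarith [hfnn x, hfle x])
      have h2 := Real.exp_pos (T * f x)
      rw [abs_le]; constructor <;> nlinarith
    have hmono : ∫ x, (Real.exp (T * f x) - 1) ∂ν ≤ ∫ x, U.indicator (fun _ => Real.exp T - 1) x ∂ν := by
      refine integral_mono hintg ((integrable_const _).indicator hUo.measurableSet) (fun x => ?_)
      by_cases hx : x ∈ U
      · rw [indicator_of_mem hx]
        have : Real.exp (T * f x) ≤ Real.exp T := Real.exp_le_exp.2 (by nlinarith [hfnn x, hfle x])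
        linarith
      · rw [indicator_of_notMem hx]
        have : f x = 0 := hf0 hx
        simp [this]
    have hind : ∫ x, U.indicator (fun _ => Real.exp T - 1) x ∂ν = (ν U).toReal * (Real.exp T - 1) := by
      rw [integral_indicator_const _ hUo.measurableSet]; simp [mul_comm, Measure.real]
    have hνUr : (ν U).toReal ≤ (Real.exp T)⁻¹ := by
      have := ENNReal.toReal_mono (ENNReal.ofReal_ne_top) hνU.le
      rwa [ENNReal.toReal_ofReal (by positivity)] at this
    have hle1 : (ν U).toReal * (Real.exp T - 1) ≤ 1 := by
      have h2 : (0:ℝ) < Real.exp T := Real.exp_pos T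
      have h3 : (0:ℝ) ≤ (ν U).toReal := ENNReal.toReal_nonneg
      have h6 : 1 < Real.exp T := by nlinarith [Real.add_one_le_exp T]
      have h4 : (ν U).toReal * (Real.exp T - 1) ≤ (Real.exp T)⁻¹ * (Real.exp T - 1) :=
        mul_le_mul_of_nonneg_right hνUr (by linarith)
      have h5 : (Real.exp T)⁻¹ * (Real.exp T - 1) ≤ 1 := by
        rw [mul_sub, inv_mul_cancel₀ h2.ne']
        nlinarith [inv_pos.2 h2]
      linarith
    linarith [hmono, hind, hle1]
  have : c + 2 ≤ ∫ x, T * f x ∂μ := by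
    rw [hT] at hlow ⊢
    rw [div_mul_cancel₀ _ hmpos.ne'] at hlow
    exact hlow
  rw [dualF]
  linarith

/-- nonnegativity of the truncated entropy integrand -/
lemma trunc_nonneg {s t : ℝ} (hs : 0 ≤ s) (ht : 0 < t)
    (hcase : (1 ≤ s → 1 ≤ t ∧ t ≤ s) ∧ (s ≤ 1 → s ≤ t ∧ t ≤ 1)) :
    0 ≤ s * Real.log t - t + 1 := by
  rcases le_total 1 s with h1|h1
  · obtain ⟨h1t, hts⟩ := hcase.1 h1
    have hlog : 0 ≤ Real.log t := Real.log_nonneg h1t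
    have h2 : t * Real.log t ≥ t - 1 := by
      have := log_ge_one_sub_inv ht
      have h3 : t * (1 - t⁻¹) ≤ t * Real.log t := mul_le_mul_of_nonneg_left this ht.le
      have h4 : t * t⁻¹ = 1 := mul_inv_cancel₀ ht.ne'
      nlinarith
    have h5 : t * Real.log t ≤ s * Real.log t := mul_le_mul_of_nonneg_right hts hlog
    linarith
  · obtain ⟨hst, ht1⟩ := hcase.2 h1
    have hlog : Real.log t ≤ 0 := Real.log_nonpos ht.le ht1
    have h5 : t * Real.log t ≤ s * Real.log t := by nlinarith
    have h6 : 0 ≤ KLphi t := KLphi_nonneg ht.le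
    rw [KLphi] at h6
    linarith

lemma exists_dual_gt_of_ac {X : Type*} [MetricSpace X] [CompactSpace X] [MeasurableSpace X]
    [BorelSpace X] (μ ν : Measure X) [IsProbabilityMeasure μ] [IsProbabilityMeasure ν]
    (hac : μ ≪ ν) (c : ℝ) (hc0 : 0 ≤ c) (hc : ENNReal.ofReal c < KL μ ν) :
    ∃ f : X → ℝ, Continuous f ∧ c < dualF μ ν f := by
  set r : X → ℝ := fun x => (μ.rnDeriv ν x).toReal with hrdef
  have hrm : Measurable r := (Measure.measurable_rnDeriv μ ν).ennreal_toReal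
  have hrnn : ∀ x, 0 ≤ r x := fun x => ENNReal.toReal_nonneg
  have hri : Integrable r ν := Measure.integrable_toReal_rnDeriv
  set Kk : ℕ → ℝ := fun k => (k : ℝ) + 1 with hKdef
  have hK1 : ∀ k, 1 ≤ Kk k := fun k => by
    have : (0:ℝ) ≤ k := Nat.cast_nonneg k
    simp only [hKdef]; linarith
  have hKpos : ∀ k, 0 < Kk k := fun k => lt_of_lt_of_le one_pos (hK1 k)
  set R : ℕ → X → ℝ := fun k x => min (max (r x) (Kk k)⁻¹) (Kk k) with hRdef
  have hRpos : ∀ k x, 0 < R k x := fun k x =>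
    lt_min (lt_of_lt_of_le (inv_pos.2 (hKpos k)) (le_max_right _ _)) (hKpos k)
  have hRm : ∀ k, Measurable (R k) := fun k => (hrm.max measurable_const).min measurable_const
  have hKinv1 : ∀ k, (Kk k)⁻¹ ≤ 1 := fun k => by
    have := one_div_le_one_div_of_le one_pos (hK1 k)
    simpa [one_div] using this
  have hKinv : ∀ k, (Kk k)⁻¹ ≤ Kk k := fun k => (hKinv1 k).trans (hK1 k)
  have hRlb : ∀ k x, (Kk k)⁻¹ ≤ R k x := fun k x =>
    le_min (le_max_right _ _) (hKinv k)
  have hRub : ∀ k x, R k x ≤ Kk k := fun k x => min_le_right _ _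
  -- the truncated integrand
  set h : ℕ → X → ℝ := fun k x => r x * Real.log (R k x) - R k x + 1 with hhdef
  have hmeas : ∀ k, Measurable (h k) := fun k =>
    ((hrm.mul ((Real.measurable_log).comp (hRm k))).sub (hRm k)).add measurable_const
  have hnn : ∀ k x, 0 ≤ h k x := by
    intro k x
    refine trunc_nonneg (hrnn x) (hRpos k x) ⟨fun h1 => ?_, fun h1 => ?_⟩
    · have hmax : max (r x) (Kk k)⁻¹ = r x := max_eq_left ((hKinv1 k).trans h1)
      exact ⟨by rw [hRdef]; simp only [hmax]; exact le_min h1 (hK1 k),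
             by rw [hRdef]; simp only [hmax]; exact min_le_left _ _⟩
    · have hmin : min (max (r x) (Kk k)⁻¹) (Kk k) = max (r x) (Kk k)⁻¹ :=
        min_eq_left (max_le (h1.trans (hK1 k)) (hKinv k))
      exact ⟨by rw [hRdef]; simp only [hmin]; exact le_max_left _ _,
             by rw [hRdef]; simp only [hmin]; exact max_le h1 (hKinv1 k)⟩
  -- pointwise convergence
  have hpt : ∀ x, Tendsto (fun k => ENNReal.ofReal (h k x)) atTop
      (nhds (ENNReal.ofReal (KLphi (r x)))) := by
    intro x
    have hreal : Tendsto (fun k => h k x) atTop (nhds (KLphi (r x))) := by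
      rcases eq_or_lt_of_le (hrnn x) with h0|h0
      · have hR : ∀ k, R k x = (Kk k)⁻¹ := by
          intro k
          rw [hRdef]
          simp only [← h0]
          rw [max_eq_right (inv_pos.2 (hKpos k)).le, min_eq_left (hKinv k)]
        have hval : ∀ k, h k x = 1 - (Kk k)⁻¹ := by
          intro k
          rw [hhdef]; simp only [hR k, ← h0]; ring
        have hlim : Tendsto (fun k : ℕ => 1 - (Kk k)⁻¹) atTop (nhds 1) := by
          have h2 : Tendsto (fun k : ℕ => (Kk k)⁻¹) atTop (nhds 0) := by
            simp only [hKdef, ← one_div]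
            exact tendsto_one_div_add_atTop_nhds_zero_nat
          simpa using (tendsto_const_nhds (x := (1:ℝ))).sub h2
        have hphi : KLphi (r x) = 1 := by rw [← h0]; simp [KLphi]
        rw [hphi]
        exact hlim.congr (fun k => (hval k).symm)
      · obtain ⟨N, hN⟩ := exists_nat_ge (max (r x) (r x)⁻¹)
        refine tendsto_const_nhds.congr' ?_
        filter_upwards [eventually_ge_atTop N] with k hk
        have hKge : max (r x) (r x)⁻¹ ≤ Kk k := by
          refine hN.trans ?_
          simp only [hKdef]
          have : (N:ℝ) ≤ (k:ℝ) := Nat.cast_le.2 hk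
          linarith
        have hinv : (Kk k)⁻¹ ≤ r x := by
          have h2 : (r x)⁻¹ ≤ Kk k := (le_max_right _ _).trans hKge
          have h3 := inv_anti₀ (inv_pos.2 h0) h2
          rwa [inv_inv] at h3
        have hRx : R k x = r x := by
          rw [hRdef]
          simp only [max_eq_left hinv]
          exact min_eq_left ((le_max_left _ _).trans hKge)
        rw [hhdef, KLphi]
        simp only [hRx]
    exact (ENNReal.continuous_ofReal.tendsto _).comp hreal
  -- Fatou
  have hKLr : KL μ ν = ∫⁻ x, ENNReal.ofReal (KLphi (r x)) ∂ν := by simp [KL, hac, hrdef]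
  have hFatou : KL μ ν ≤ liminf (fun k => ∫⁻ x, ENNReal.ofReal (h k x) ∂ν) atTop := by
    rw [hKLr]
    have h1 : ∫⁻ x, ENNReal.ofReal (KLphi (r x)) ∂ν
        = ∫⁻ x, liminf (fun k => ENNReal.ofReal (h k x)) atTop ∂ν :=
      lintegral_congr (fun x => ((hpt x).liminf_eq).symm)
    rw [h1]
    exact lintegral_liminf_le (fun k => ENNReal.measurable_ofReal.comp (hmeas k))
  obtain ⟨k, hk⟩ := (eventually_lt_of_lt_liminf (lt_of_lt_of_le hc hFatou)).exists
  -- the bounded measurable potential f₀ = log (R k)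
  set b : ℝ := Real.log (Kk k) with hbdef
  have hb0 : 0 ≤ b := Real.log_nonneg (hK1 k)
  set f₀ : X → ℝ := fun x => Real.log (R k x) with hf₀def
  have hf₀m : Measurable f₀ := Real.measurable_log.comp (hRm k)
  have hf₀b : ∀ x, |f₀ x| ≤ b := by
    intro x
    rw [abs_le]
    constructor
    · have h4 := (Real.log_le_log_iff (inv_pos.2 (hKpos k)) (hRpos k x)).2 (hRlb k x)
      rw [Real.log_inv] at h4
      simpa [hbdef, hf₀def] using h4
    · simpa [hbdef, hf₀def] using (Real.log_le_log_iff (hRpos k x) (hKpos k)).2 (hRub k x)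
  have hexpf₀ : ∀ x, Real.exp (f₀ x) = R k x := fun x => Real.exp_log (hRpos k x)
  -- integrability
  have hf₀iν : Integrable f₀ ν := integrable_of_bdd hf₀m.aestronglyMeasurable hf₀b
  have hrf₀ : Integrable (fun x => r x * f₀ x) ν := by
    have := hri.bdd_mul hf₀m.aestronglyMeasurable
      (Eventually.of_forall fun x => by simpa [Real.norm_eq_abs] using hf₀b x)
    simpa [mul_comm] using this
  have hRiν : Integrable (R k) ν := integrable_of_bdd (hRm k).aestronglyMeasurable
    (C := Kk k) (fun x => by rw [abs_of_pos (hRpos k x)]; exact hRub k x)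
  have hRi1 : Integrable (fun x => R k x - 1) ν := hRiν.sub (integrable_const 1)
  have hhiν : Integrable (h k) ν := by
    have heq : h k = fun x => (r x * f₀ x - (R k x - 1)) := by
      funext x; rw [hhdef]; simp only [hf₀def]; ring
    rw [heq]
    exact hrf₀.sub hRi1
  -- dualF μ ν f₀ = ∫ h k dν
  have hduale : dualF μ ν f₀ = ∫ x, h k x ∂ν := by
    rw [dualF]
    have h1 : ∫ x, f₀ x ∂μ = ∫ x, r x * f₀ x ∂ν := by
      rw [← MeasureTheory.integral_rnDeriv_smul hac (f := f₀)]
      simp [hrdef, smul_eq_mul]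
    have h2 : (fun x => Real.exp (f₀ x) - 1) = fun x => R k x - 1 := by
      funext x; rw [hexpf₀ x]
    rw [h1, h2, ← integral_sub hrf₀ hRi1]
    congr 1
    funext x
    rw [hhdef]; simp only [hf₀def]; ring
  -- c < dualF μ ν f₀
  have hlt_top : (∫⁻ x, ENNReal.ofReal (h k x) ∂ν) < ⊤ := by
    have h2 := hhiν.2
    rwa [hasFiniteIntegral_iff_ofReal (Eventually.of_forall (hnn k))] at h2
  have hceq : ∫ x, h k x ∂ν = (∫⁻ x, ENNReal.ofReal (h k x) ∂ν).toReal := by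
    rw [integral_eq_lintegral_of_nonneg_ae (Eventually.of_forall (hnn k))
      (hmeas k).aestronglyMeasurable]
  have hcd : c < dualF μ ν f₀ := by
    rw [hduale, hceq]
    have h3 := ENNReal.toReal_strict_mono hlt_top.ne hk
    rwa [ENNReal.toReal_ofReal hc0] at h3
  -- approximate f₀ by a continuous function in L¹(μ + ν)
  set δ : ℝ := dualF μ ν f₀ - c with hδdef
  have hδpos : 0 < δ := by rw [hδdef]; linarith
  set ε' : ℝ := δ / (2 * (1 + Real.exp b)) with hε'def
  have hε'pos : 0 < ε' := by rw [hε'def]; positivity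
  have hf₀iμ : Integrable f₀ μ := integrable_of_bdd hf₀m.aestronglyMeasurable hf₀b
  have hf₀sum : Integrable f₀ (μ + ν) := integrable_of_bdd hf₀m.aestronglyMeasurable hf₀b
  obtain ⟨g₀, hg₀, hg₀i⟩ := hf₀sum.exists_boundedContinuous_integral_sub_le hε'pos
  set f : X → ℝ := fun x => max (-b) (min b (g₀ x)) with hfdef
  have hfc : Continuous f := continuous_const.max (continuous_const.min g₀.continuous)
  have hfb : ∀ x, |f x| ≤ b := by
    intro x
    rw [abs_le]
    exact ⟨le_max_left _ _, max_le (by linarith) (min_le_left _ _)⟩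
  have hfd : ∀ x, |f x - f₀ x| ≤ ‖f₀ x - g₀ x‖ := by
    intro x
    rw [Real.norm_eq_abs, abs_sub_comm (f₀ x) (g₀ x)]
    exact clamp_abs_le (hf₀b x)
  have hnμ : Integrable (fun x => ‖f₀ x - g₀ x‖) μ := (hf₀iμ.sub (g₀.integrable μ)).norm
  have hnν : Integrable (fun x => ‖f₀ x - g₀ x‖) ν := (hf₀iν.sub (g₀.integrable ν)).norm
  have hsplit : ∫ x, ‖f₀ x - g₀ x‖ ∂(μ + ν)
      = (∫ x, ‖f₀ x - g₀ x‖ ∂μ) + ∫ x, ‖f₀ x - g₀ x‖ ∂ν := integral_add_measure hnμ hnν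
  have hintnnμ : 0 ≤ ∫ x, ‖f₀ x - g₀ x‖ ∂μ := integral_nonneg (fun x => norm_nonneg _)
  have hintnnν : 0 ≤ ∫ x, ‖f₀ x - g₀ x‖ ∂ν := integral_nonneg (fun x => norm_nonneg _)
  have hμe : ∫ x, ‖f₀ x - g₀ x‖ ∂μ ≤ ε' := by rw [hsplit] at hg₀; linarith
  have hνe : ∫ x, ‖f₀ x - g₀ x‖ ∂ν ≤ ε' := by rw [hsplit] at hg₀; linarith
  have hfiμ : Integrable f μ := integrable_of_bdd hfc.measurable.aestronglyMeasurable hfb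
  have hfiν : Integrable f ν := integrable_of_bdd hfc.measurable.aestronglyMeasurable hfb
  have hfdiμ : Integrable (fun x => |f x - f₀ x|) μ := (hfiμ.sub hf₀iμ).abs
  have hfdiν : Integrable (fun x => |f x - f₀ x|) ν := (hfiν.sub hf₀iν).abs
  have hdμ : ∫ x, |f x - f₀ x| ∂μ ≤ ε' := (integral_mono hfdiμ hnμ hfd).trans hμe
  have hdν : ∫ x, |f x - f₀ x| ∂ν ≤ ε' := (integral_mono hfdiν hnν hfd).trans hνe
  refine ⟨f, hfc, ?_⟩
  -- compare the two dual values
  have hA1 : |(∫ x, f x ∂μ) - ∫ x, f₀ x ∂μ| ≤ ε' := by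
    rw [← integral_sub hfiμ hf₀iμ]
    calc |∫ x, (f x - f₀ x) ∂μ| ≤ ∫ x, |f x - f₀ x| ∂μ := by
          simpa [Real.norm_eq_abs] using norm_integral_le_integral_norm (μ := μ) (fun x => f x - f₀ x)
      _ ≤ ε' := hdμ
  have hexpib : ∀ u : X → ℝ, Measurable u → (∀ x, |u x| ≤ b) →
      Integrable (fun x => Real.exp (u x) - 1) ν := by
    intro u hum hub
    refine integrable_of_bdd ((Real.measurable_exp.comp hum).sub measurable_const).aestronglyMeasurable
      (C := Real.exp b + 1) (fun x => ?_)
    have h1 : Real.exp (u x) ≤ Real.exp b := Real.exp_le_exp.2 (le_of_abs_le (hub x))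
    have h2 := Real.exp_pos (u x)
    rw [abs_le]; constructor <;> nlinarith
  have hfe : Integrable (fun x => Real.exp (f x) - 1) ν := hexpib f hfc.measurable hfb
  have hf₀e : Integrable (fun x => Real.exp (f₀ x) - 1) ν := hexpib f₀ hf₀m hf₀b
  have hA2 : |(∫ x, (Real.exp (f x) - 1) ∂ν) - ∫ x, (Real.exp (f₀ x) - 1) ∂ν|
      ≤ Real.exp b * ε' := by
    rw [← integral_sub hfe hf₀e]
    have hptw : ∀ x, |Real.exp (f x) - 1 - (Real.exp (f₀ x) - 1)| ≤ Real.exp b * |f x - f₀ x| := by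
      intro x
      have := abs_exp_sub_exp_le (hfb x) (hf₀b x)
      calc |Real.exp (f x) - 1 - (Real.exp (f₀ x) - 1)| = |Real.exp (f x) - Real.exp (f₀ x)| := by
            congr 1; ring
        _ ≤ Real.exp b * |f x - f₀ x| := this
    calc |∫ x, (Real.exp (f x) - 1 - (Real.exp (f₀ x) - 1)) ∂ν|
        ≤ ∫ x, |Real.exp (f x) - 1 - (Real.exp (f₀ x) - 1)| ∂ν := by
          simpa [Real.norm_eq_abs] using
            norm_integral_le_integral_norm (μ := ν) (fun x => Real.exp (f x) - 1 - (Real.exp (f₀ x) - 1))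
      _ ≤ ∫ x, Real.exp b * |f x - f₀ x| ∂ν := by
          refine integral_mono (hfe.sub hf₀e).abs (hfdiν.const_mul _) hptw
      _ = Real.exp b * ∫ x, |f x - f₀ x| ∂ν := integral_const_mul _ _
      _ ≤ Real.exp b * ε' := by
          exact mul_le_mul_of_nonneg_left hdν (Real.exp_pos b).le
  have hkey : ε' + Real.exp b * ε' = δ / 2 := by
    rw [hε'def]
    have hpos : (0:ℝ) < 1 + Real.exp b := by positivity
    field_simp
  have habs1 := abs_le.1 hA1
  have habs2 := abs_le.1 hA2
  have hδeq : δ = (∫ x, f₀ x ∂μ) - (∫ x, (Real.exp (f₀ x) - 1) ∂ν) - c := by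
    rw [hδdef, dualF]
  rw [dualF]
  linarith [hδpos, hkey, hδeq, habs1.1, habs1.2, habs2.1, habs2.2]

lemma exists_dual_gt {X : Type*} [MetricSpace X] [CompactSpace X] [MeasurableSpace X]
    [BorelSpace X] (μ ν : Measure X) [IsProbabilityMeasure μ] [IsProbabilityMeasure ν]
    (c : ℝ) (hc : (c : EReal) < ((KL μ ν : ℝ≥0∞) : EReal)) :
    ∃ f : X → ℝ, Continuous f ∧ c < dualF μ ν f := by
  rcases lt_or_ge c 0 with h|h
  · exact ⟨fun _ => 0, continuous_const, by rw [dualF_zero]; exact h⟩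
  · have hc' : ENNReal.ofReal c < KL μ ν := by
      rw [← EReal.coe_ennreal_lt_coe_ennreal_iff]
      calc ((ENNReal.ofReal c : ℝ≥0∞) : EReal)
          = ((max c 0 : ℝ) : EReal) := EReal.coe_ennreal_ofReal
        _ = (c : EReal) := by rw [max_eq_left h]
        _ < _ := hc
    by_cases hac : μ ≪ ν
    · exact exists_dual_gt_of_ac μ ν hac c h hc'
    · exact exists_dual_gt_of_not_ac μ ν hac c h

/-- ext of finite measures from equality of integrals of continuous functions -/
lemma meas_ext {X : Type*} [MetricSpace X] [MeasurableSpace X] [BorelSpace X]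
    (μ ν : Measure X) [IsFiniteMeasure μ] [IsFiniteMeasure ν]
    (h : ∀ u : X → ℝ, Continuous u → ∫ x, u x ∂μ = ∫ x, u x ∂ν) : μ = ν := by
  apply ext_of_forall_lintegral_eq_of_IsFiniteMeasure
  intro f
  have h1 := f.lintegral_lt_top_of_nnreal μ
  have h2 := f.lintegral_lt_top_of_nnreal ν
  have h3 := h (fun x => (f x : ℝ)) (NNReal.continuous_coe.comp f.continuous)
  rw [← BoundedContinuousFunction.toReal_lintegral_coe_eq_integral f μ,
    ← BoundedContinuousFunction.toReal_lintegral_coe_eq_integral f ν] at h3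
  exact (ENNReal.toReal_eq_toReal_iff' h1.ne h2.ne).mp h3

section ProdConv
variable {Z Y : Type*}
  [MetricSpace Z] [CompactSpace Z] [MeasurableSpace Z] [BorelSpace Z]
  [MetricSpace Y] [CompactSpace Y] [MeasurableSpace Y] [BorelSpace Y]

/-- weak convergence of product measures -/
lemma prod_wkTendsto (σs : ℕ → Measure Z) (σ : Measure Z)
    [∀ n, IsProbabilityMeasure (σs n)] [IsProbabilityMeasure σ] (hσ : WkTendsto σs σ)
    (ρs : ℕ → Measure Y) (ρ : Measure Y)
    [∀ n, IsProbabilityMeasure (ρs n)] [IsProbabilityMeasure ρ] (hρ : WkTendsto ρs ρ) :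
    WkTendsto (fun n => (σs n).prod (ρs n)) (σ.prod ρ) := by
  intro F hF
  -- uniform continuity modulus
  have hFu : UniformContinuous F := CompactSpace.uniformContinuous_of_continuous hF
  have hmod : ∀ ε : ℝ, 0 < ε → ∃ δ : ℝ, 0 < δ ∧ ∀ (m : Measure Y), IsProbabilityMeasure m →
      ∀ z z' : Z, dist z z' < δ → |(∫ y, F (z, y) ∂m) - ∫ y, F (z', y) ∂m| ≤ ε := by
    intro ε hε
    rw [Metric.uniformContinuous_iff] at hFu
    obtain ⟨δ, hδ, hδ'⟩ := hFu (ε/2) (by linarith)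
    refine ⟨δ, hδ, fun m hm z z' hzz => ?_⟩
    haveI := hm
    have hint1 : Integrable (fun y => F (z, y)) m :=
      cont_integrable m (hF.comp (Continuous.prodMk_right z))
    have hint2 : Integrable (fun y => F (z', y)) m :=
      cont_integrable m (hF.comp (Continuous.prodMk_right z'))
    rw [← integral_sub hint1 hint2]
    calc |∫ y, (F (z, y) - F (z', y)) ∂m| ≤ ∫ y, |F (z, y) - F (z', y)| ∂m := by
          simpa [Real.norm_eq_abs] using
            norm_integral_le_integral_norm (μ := m) (fun y => F (z, y) - F (z', y))
      _ ≤ ∫ _, (ε/2) ∂m := by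
          refine integral_mono (hint1.sub hint2).abs (integrable_const _) (fun y => ?_)
          have : dist (z, y) (z', y) < δ := by
            rw [Prod.dist_eq]
            simp only [dist_self]
            rw [max_eq_left dist_nonneg]
            exact hzz
          exact le_of_lt (by simpa [Real.dist_eq, abs_sub_comm] using hδ' this)
      _ = ε/2 := by simp
      _ ≤ ε := by linarith
  set h : Z → ℝ := fun z => ∫ y, F (z, y) ∂ρ with hhdef
  set hn : ℕ → Z → ℝ := fun n z => ∫ y, F (z, y) ∂(ρs n) with hndef
  have hcont' : ∀ (m : Measure Y), IsProbabilityMeasure m →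
      Continuous (fun z => ∫ y, F (z, y) ∂m) := by
    intro m hm
    rw [Metric.continuous_iff]
    intro z ε hε
    obtain ⟨δ, hδ, hδ'⟩ := hmod (ε/2) (by linarith)
    exact ⟨δ, hδ, fun z' hz' => lt_of_le_of_lt
      (by simpa [Real.dist_eq] using hδ' m hm z' z hz') (by linarith)⟩
  have hcont : Continuous h := hcont' ρ inferInstance
  have hncont : ∀ n, Continuous (hn n) := fun n => hcont' (ρs n) inferInstance
  -- uniform convergence of hn to h
  have hunif : ∀ ε : ℝ, 0 < ε → ∀ᶠ n in atTop, ∀ z, |hn n z - h z| ≤ ε := by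
    intro ε hε
    obtain ⟨δ, hδ, hδ'⟩ := hmod (ε/3) (by linarith)
    obtain ⟨t, ht⟩ := isCompact_univ.elim_finite_subcover (fun z : Z => Metric.ball z δ)
      (fun z => Metric.isOpen_ball) (fun x _ => mem_iUnion.2 ⟨x, Metric.mem_ball_self hδ⟩)
    have hptconv : ∀ z₀ ∈ t, ∀ᶠ n in atTop, |hn n z₀ - h z₀| ≤ ε/3 := by
      intro z₀ _
      have h5 := hρ (fun y => F (z₀, y)) (hF.comp (Continuous.prodMk_right z₀))
      obtain ⟨N, hN⟩ := Metric.tendsto_atTop.1 h5 (ε/3) (by linarith)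
      filter_upwards [eventually_ge_atTop N] with n hn2
      exact le_of_lt (by simpa [Real.dist_eq, hndef, hhdef] using hN n hn2)
    have hall : ∀ᶠ n in atTop, ∀ z₀ ∈ t, |hn n z₀ - h z₀| ≤ ε/3 :=
      (eventually_all_finset t).2 hptconv
    filter_upwards [hall] with n hnall z
    obtain ⟨z₀, hz₀t, hz₀⟩ : ∃ z₀ ∈ t, z ∈ Metric.ball z₀ δ := by
      have := ht (mem_univ z)
      simpa using this
    have e1 : |hn n z - hn n z₀| ≤ ε/3 := hδ' (ρs n) inferInstance z z₀ hz₀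
    have e2 : |h z₀ - h z| ≤ ε/3 := hδ' ρ inferInstance z₀ z (by
      rw [dist_comm]; exact hz₀)
    have e3 := hnall z₀ hz₀t
    calc |hn n z - h z| = |(hn n z - hn n z₀) + (hn n z₀ - h z₀) + (h z₀ - h z)| := by ring_nf
      _ ≤ |hn n z - hn n z₀| + |hn n z₀ - h z₀| + |h z₀ - h z| := by
          exact (abs_add_le _ _).trans (add_le_add_left (abs_add_le _ _) _)
      _ ≤ ε/3 + ε/3 + ε/3 := by linarith
      _ = ε := by ring
  -- Fubini
  have hFin : ∀ n, Integrable F ((σs n).prod (ρs n)) := fun n => cont_integrable _ hF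
  have hFi : Integrable F (σ.prod ρ) := cont_integrable _ hF
  have heqn : ∀ n, ∫ p, F p ∂((σs n).prod (ρs n)) = ∫ z, hn n z ∂(σs n) := fun n =>
    integral_prod F (hFin n)
  have heq : ∫ p, F p ∂(σ.prod ρ) = ∫ z, h z ∂σ := integral_prod F hFi
  rw [heq]
  simp only [heqn]
  -- split
  have hdiff : Tendsto (fun n => (∫ z, hn n z ∂(σs n)) - ∫ z, h z ∂(σs n)) atTop (nhds 0) := by
    rw [NormedAddCommGroup.tendsto_nhds_zero]
    intro ε hε
    filter_upwards [hunif (ε/2) (by linarith)] with n hn'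
    have hhin : Integrable (hn n) (σs n) := cont_integrable _ (hncont n)
    have hhi : Integrable h (σs n) := cont_integrable _ hcont
    rw [← integral_sub hhin hhi]
    have : |∫ z, (hn n z - h z) ∂(σs n)| ≤ ε/2 := by
      calc |∫ z, (hn n z - h z) ∂(σs n)| ≤ ∫ z, |hn n z - h z| ∂(σs n) := by
            simpa [Real.norm_eq_abs] using
              norm_integral_le_integral_norm (μ := σs n) (fun z => hn n z - h z)
        _ ≤ ∫ _, (ε/2) ∂(σs n) := integral_mono (hhin.sub hhi).abs (integrable_const _)
            (fun z => hn' z)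
        _ = ε/2 := by simp
    rw [Real.norm_eq_abs]
    linarith
  have hfin := hdiff.add (hσ h hcont)
  rw [zero_add] at hfin
  refine hfin.congr (fun n => ?_)
  ring

end ProdConv

lemma wk_map_eq {X W : Type*} [MetricSpace X] [CompactSpace X] [MeasurableSpace X] [BorelSpace X]
    [MetricSpace W] [CompactSpace W] [MeasurableSpace W] [BorelSpace W]
    (ls : ℕ → Measure X) (l : Measure X) [∀ n, IsProbabilityMeasure (ls n)]
    [IsProbabilityMeasure l] (hlw : WkTendsto ls l)
    (proj : X → W) (hpc : Continuous proj)
    (τs : ℕ → Measure W) (τ : Measure W) [∀ n, IsProbabilityMeasure (τs n)]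
    [IsProbabilityMeasure τ] (hτ : WkTendsto τs τ) (hlm : ∀ n, (ls n).map proj = τs n) :
    l.map proj = τ := by
  have hpm : Measurable proj := hpc.measurable
  haveI : IsProbabilityMeasure (l.map proj) := Measure.isProbabilityMeasure_map hpm.aemeasurable
  refine meas_ext _ _ (fun u hu => ?_)
  have hu1 : ∫ x, u x ∂(l.map proj) = ∫ p, u (proj p) ∂l :=
    integral_map hpm.aemeasurable hu.aestronglyMeasurable
  have hconv1 : Tendsto (fun n => ∫ p, u (proj p) ∂(ls n)) atTop (nhds (∫ p, u (proj p) ∂l)) :=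
    hlw (fun p => u (proj p)) (hu.comp hpc)
  have heq2 : ∀ n, ∫ p, u (proj p) ∂(ls n) = ∫ x, u x ∂(τs n) := by
    intro n
    rw [← hlm n, integral_map hpm.aemeasurable hu.aestronglyMeasurable]
  rw [funext heq2] at hconv1
  rw [hu1]
  exact tendsto_nhds_unique hconv1 (hτ u hu)

lemma prodM_eq {A B : Type*} [MeasurableSpace A] [MeasurableSpace B]
    (α : Measure A) (β : Measure B) : prodM α β = α.prod β := (Measure.prod_def α β).symm

theorem stmt6 {Z Y : Type*}
    [MetricSpace Z] [CompactSpace Z] [MeasurableSpace Z] [BorelSpace Z]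
    [MetricSpace Y] [CompactSpace Y] [MeasurableSpace Y] [BorelSpace Y]
    (gs : ℕ → Z × Y → ℝ) (g : Z × Y → ℝ)
    (hgc : ∀ n, Continuous (gs n)) (hg : Continuous g)
    (hgu : TendstoUniformly gs g atTop)
    (ηs : ℕ → ℝ) (η : ℝ) (hηs : ∀ n, 0 ≤ ηs n) (hη : 0 ≤ η)
    (hηlim : Tendsto ηs atTop (nhds η))
    (σs : ℕ → Measure Z) (σ : Measure Z)
    [∀ n, IsProbabilityMeasure (σs n)] [IsProbabilityMeasure σ] (hσ : WkTendsto σs σ)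
    (ρs : ℕ → Measure Y) (ρ : Measure Y)
    [∀ n, IsProbabilityMeasure (ρs n)] [IsProbabilityMeasure ρ] (hρ : WkTendsto ρs ρ)
    (ls : ℕ → Measure (Z × Y)) (l : Measure (Z × Y)) [∀ n, IsProbabilityMeasure (ls n)]
    (hl1 : ∀ n, (ls n).map Prod.fst = σs n) (hl2 : ∀ n, (ls n).map Prod.snd = ρs n)
    (hlw : WkTendsto ls l) :
    l.map Prod.fst = σ ∧ l.map Prod.snd = ρ ∧
      ((∫ p, g p ∂l : ℝ) : EReal) + (η : EReal) * (KL l (prodM σ ρ) : EReal) ≤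
        liminf (fun n => ((∫ p, gs n p ∂ls n : ℝ) : EReal) +
          (ηs n : EReal) * (KL (ls n) (prodM (σs n) (ρs n)) : EReal)) atTop := by
  -- l is a probability measure
  have hone : ∫ p, (1:ℝ) ∂l = 1 := by
    have h1 := hlw (fun _ => (1:ℝ)) continuous_const
    have h2 : (fun n => ∫ _p, (1:ℝ) ∂(ls n)) = fun _ => (1:ℝ) := by
      funext n; simp
    rw [h2] at h1
    simpa using tendsto_nhds_unique h1 tendsto_const_nhds
  have hluniv : l univ = 1 := by
    rw [integral_const, smul_eq_mul, mul_one] at hone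
    exact (ENNReal.toReal_eq_one_iff _).1 hone
  haveI hlprob : IsProbabilityMeasure l := ⟨hluniv⟩
  -- marginals
  haveI hm1p : IsProbabilityMeasure (l.map Prod.fst) :=
    Measure.isProbabilityMeasure_map measurable_fst.aemeasurable
  haveI hm2p : IsProbabilityMeasure (l.map Prod.snd) :=
    Measure.isProbabilityMeasure_map measurable_snd.aemeasurable
  have hmarg1 : l.map Prod.fst = σ :=
    wk_map_eq ls l hlw Prod.fst continuous_fst σs σ hσ hl1
  have hmarg2 : l.map Prod.snd = ρ :=
    wk_map_eq ls l hlw Prod.snd continuous_snd ρs ρ hρ hl2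
  refine ⟨hmarg1, hmarg2, ?_⟩
  -- convergence of the running cost integrals
  have hgl : Tendsto (fun n => ∫ p, gs n p ∂(ls n)) atTop (nhds (∫ p, g p ∂l)) := by
    have hdiff : Tendsto (fun n => (∫ p, gs n p ∂(ls n)) - ∫ p, g p ∂(ls n)) atTop (nhds 0) := by
      rw [NormedAddCommGroup.tendsto_nhds_zero]
      intro ε hε
      rw [Metric.tendstoUniformly_iff] at hgu
      filter_upwards [hgu (ε/2) (by linarith)] with n hn
      have hin : Integrable (gs n) (ls n) := cont_integrable _ (hgc n)
      have hig : Integrable g (ls n) := cont_integrable _ hg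
      rw [← integral_sub hin hig, Real.norm_eq_abs]
      have : |∫ p, (gs n p - g p) ∂(ls n)| ≤ ε/2 := by
        calc |∫ p, (gs n p - g p) ∂(ls n)| ≤ ∫ p, |gs n p - g p| ∂(ls n) := by
              simpa [Real.norm_eq_abs] using
                norm_integral_le_integral_norm (μ := ls n) (fun p => gs n p - g p)
          _ ≤ ∫ _, (ε/2) ∂(ls n) := integral_mono (hin.sub hig).abs (integrable_const _)
              (fun p => le_of_lt (by simpa [Real.dist_eq, abs_sub_comm] using hn p))
          _ = ε/2 := by simp
      linarith
    have := hdiff.add (hlw g hg)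
    rw [zero_add] at this
    exact this.congr (fun n => by ring)
  -- convergence of dual functionals
  have hprodconv := prod_wkTendsto σs σ hσ ρs ρ hρ
  have hdualconv : ∀ f : Z × Y → ℝ, Continuous f →
      Tendsto (fun n => dualF (ls n) ((σs n).prod (ρs n)) f) atTop
        (nhds (dualF l (σ.prod ρ) f)) := by
    intro f hf
    refine Tendsto.sub (hlw f hf) (hprodconv (fun p => Real.exp (f p) - 1)
      ((Real.continuous_exp.comp hf).sub continuous_const))
  -- the liminf bound for each dual potential
  set L := liminf (fun n => ((∫ p, gs n p ∂ls n : ℝ) : EReal) +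
      (ηs n : EReal) * (KL (ls n) (prodM (σs n) (ρs n)) : EReal)) atTop with hLdef
  haveI : IsProbabilityMeasure (σ.prod ρ) := by infer_instance
  haveI : ∀ n, IsProbabilityMeasure ((σs n).prod (ρs n)) := fun n => by infer_instance
  have claimA : ∀ c : ℝ, (c : EReal) < (KL l (prodM σ ρ) : EReal) →
      (((∫ p, g p ∂l) + η * c : ℝ) : EReal) ≤ L := by
    intro c hc
    rw [prodM_eq] at hc
    obtain ⟨f, hf, hfd⟩ := exists_dual_gt l (σ.prod ρ) c hc
    set a : ℕ → ℝ := fun n => (∫ p, gs n p ∂(ls n)) + ηs n * dualF (ls n) ((σs n).prod (ρs n)) f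
      with hadef
    have haconv : Tendsto a atTop (nhds ((∫ p, g p ∂l) + η * dualF l (σ.prod ρ) f)) :=
      hgl.add (hηlim.mul (hdualconv f hf))
    have hbound : ∀ n, (a n : EReal) ≤ ((∫ p, gs n p ∂ls n : ℝ) : EReal) +
        (ηs n : EReal) * (KL (ls n) (prodM (σs n) (ρs n)) : EReal) := by
      intro n
      rw [hadef]
      have h1 : ((ηs n * dualF (ls n) ((σs n).prod (ρs n)) f : ℝ) : EReal) ≤
          (ηs n : EReal) * (KL (ls n) (prodM (σs n) (ρs n)) : EReal) := by
        rw [EReal.coe_mul, prodM_eq]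
        exact mul_le_mul_of_nonneg_left (dual_le_KL (ls n) ((σs n).prod (ρs n)) hf)
          (EReal.coe_nonneg.2 (hηs n))
      calc ((((∫ p, gs n p ∂ls n) + ηs n * dualF (ls n) ((σs n).prod (ρs n)) f : ℝ)) : EReal)
          = ((∫ p, gs n p ∂ls n : ℝ) : EReal) +
            ((ηs n * dualF (ls n) ((σs n).prod (ρs n)) f : ℝ) : EReal) := by
            rw [← EReal.coe_add]
        _ ≤ _ := add_le_add (le_refl _) h1
    have hliminf1 : liminf (fun n => ((a n : ℝ) : EReal)) atTop ≤ L := by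
      rw [hLdef]
      exact liminf_le_liminf (Eventually.of_forall hbound)
    have hliminf2 : liminf (fun n => ((a n : ℝ) : EReal)) atTop
        = (((∫ p, g p ∂l) + η * dualF l (σ.prod ρ) f : ℝ) : EReal) :=
      (EReal.tendsto_coe.2 haconv).liminf_eq
    refine le_trans ?_ (hliminf2 ▸ hliminf1)
    rw [EReal.coe_le_coe_iff]
    nlinarith [hfd, hη]
  -- conclusion by cases on η and KL
  rcases eq_or_lt_of_le hη with hη0|hηpos
  · -- η = 0
    rw [← hη0]
    have h0 : ((0:ℝ) : EReal) * (KL l (prodM σ ρ) : EReal) = 0 := by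
      rw [EReal.coe_zero, EReal.zero_mul]
    rw [h0, add_zero]
    have hneg : ((-1:ℝ) : EReal) < ((0:ℝ) : EReal) := EReal.coe_lt_coe_iff.2 (by norm_num)
    have := claimA (-1) (lt_of_lt_of_le hneg (EReal.coe_ennreal_nonneg _))
    rw [← hη0] at this
    simpa using this
  · by_cases hK : KL l (prodM σ ρ) = ⊤
    · -- infinite KL
      have hLtop : (⊤ : EReal) ≤ L := by
        have hcc : ∀ k : ℕ, (((∫ p, g p ∂l) + η * k : ℝ) : EReal) ≤ L := by
          intro k
          refine claimA k ?_
          rw [hK, EReal.coe_ennreal_top]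
          exact EReal.coe_lt_top _
        have htop : Tendsto (fun k : ℕ => (((∫ p, g p ∂l) + η * k : ℝ) : EReal)) atTop
            (nhds (⊤ : EReal)) := by
          rw [EReal.tendsto_nhds_top_iff_real]
          intro x
          obtain ⟨N, hN⟩ := exists_nat_gt ((x - ∫ p, g p ∂l) / η)
          filter_upwards [eventually_ge_atTop N] with k hk
          rw [EReal.coe_lt_coe_iff]
          have h3 : ((x - ∫ p, g p ∂l) / η) < k := lt_of_lt_of_le hN (Nat.cast_le.2 hk)
          have h4 := (div_lt_iff₀ hηpos).1 h3
          linarith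
        exact le_of_tendsto htop (Eventually.of_forall hcc)
      rw [hK, EReal.coe_ennreal_top, EReal.mul_top_of_pos (by exact_mod_cast hηpos),
        EReal.add_top_of_ne_bot (EReal.coe_ne_bot _)]
      exact hLtop
    · -- finite KL
      set Kv : ℝ := (KL l (prodM σ ρ)).toReal with hKv
      have hKeq : ((KL l (prodM σ ρ) : ℝ≥0∞) : EReal) = ((Kv : ℝ) : EReal) := by
        rw [hKv, ← EReal.toReal_coe_ennreal (x := KL l (prodM σ ρ))]
        rw [EReal.coe_toReal]
        · exact fun h => hK (EReal.coe_ennreal_eq_top_iff.1 h)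
        · exact EReal.coe_ennreal_ne_bot _
      rw [hKeq, ← EReal.coe_mul, ← EReal.coe_add]
      have hseq : ∀ k : ℕ, (((∫ p, g p ∂l) + η * (Kv - ((k:ℝ)+1)⁻¹) : ℝ) : EReal) ≤ L := by
        intro k
        refine claimA _ ?_
        rw [hKeq, EReal.coe_lt_coe_iff]
        have hp : (0:ℝ) < ((k:ℝ)+1)⁻¹ := by positivity
        linarith
      have hlim : Tendsto (fun k : ℕ => (((∫ p, g p ∂l) + η * (Kv - ((k:ℝ)+1)⁻¹) : ℝ) : EReal))
          atTop (nhds (((∫ p, g p ∂l) + η * Kv : ℝ) : EReal)) := by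
        rw [EReal.tendsto_coe]
        have h2 : Tendsto (fun k : ℕ => ((k:ℝ)+1)⁻¹) atTop (nhds 0) := by
          simp only [← one_div]
          exact tendsto_one_div_add_atTop_nhds_zero_nat
        have h3 := tendsto_const_nhds (x := (∫ p, g p ∂l)) |>.add
          ((tendsto_const_nhds (x := η)).mul ((tendsto_const_nhds (x := Kv)).sub h2))
        simpa using h3
      exact le_of_tendsto hlim (Eventually.of_forall hseq)
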